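/- The map X ↦ 1 Tr(X) - 2 (1 ∘ X) + X on n×n matrices (where 1 ∘ X is the diagonal part of X) equals the Hadamard square of the map X ↦ 1 Tr(X) - X, in the sense that its Choi matrix is the entrywise square of the Choi matrix of X ↦ 1 Tr(X) - X. -/

import Mathlib

open Matrix Kronecker

lemma collapse_sum {n : ℕ} (b d : Fin n) (f : Fin n → Fin n → ℂ) :
    (∑ x : Fin n, ∑ y : Fin n, f x y * (if x = b ∧ y = d then 1 else 0)) = f b d := by
  simp [ite_and, mul_ite, Finset.sum_ite_eq]

theorem chi_is_hadamard_square (n : ℕ) :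
    let phi₁ : Matrix (Fin n) (Fin n) ℂ → Matrix (Fin n) (Fin n) ℂ :=
      fun X => X.trace • (1 : Matrix (Fin n) (Fin n) ℂ)
        - 2 • Matrix.diagonal (fun i => X i i) + X
    let phi₂ : Matrix (Fin n) (Fin n) ℂ → Matrix (Fin n) (Fin n) ℂ :=
      fun X => X.trace • (1 : Matrix (Fin n) (Fin n) ℂ) - X
    let Choi : (Matrix (Fin n) (Fin n) ℂ → Matrix (Fin n) (Fin n) ℂ) →
        Matrix (Fin n × Fin n) (Fin n × Fin n) ℂ :=
      fun phi => ∑ i : Fin n, ∑ j : Fin n,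
        (phi (Matrix.single i j 1)) ⊗ₖ (Matrix.single i j 1)
    Choi phi₁ = Choi phi₂ ⊙ Choi phi₂ := by
  intro phi₁ phi₂ Choi
  ext ⟨a, b⟩ ⟨c, d⟩
  simp only [Choi, phi₁, phi₂, hadamard_apply, Matrix.sum_apply, kroneckerMap_apply,
    Matrix.sub_apply, Matrix.add_apply, Matrix.smul_apply, Matrix.trace,
    Matrix.diag_apply, Matrix.single, Matrix.of_apply, Matrix.diagonal_apply,
    Matrix.one_apply, smul_eq_mul]
  rw [collapse_sum b d, collapse_sum b d]
  have hbd : (∑ x_2 : Fin n, if b = x_2 ∧ d = x_2 then (1:ℂ) else 0)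
      = if b = d then 1 else 0 := by
    simp [ite_and, Finset.sum_ite_eq, eq_comm]
  rw [hbd]
  by_cases h1 : a = c <;> by_cases h2 : b = d <;> by_cases h3 : b = a <;>
    by_cases h4 : d = c <;> simp_all <;> ring
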